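/- arXiv:1912.11914 — 7 statements merged into one kernel-verified Lean document; each statement's English description precedes it below -/
import Mathlib

section
/- Let α > 0, Δ > 0, and define A : ℤ → ℝ by A[h] = e^{−αΔ|h|} (the Matérn ν = 1/2 covariance on a grid with spacing Δ, σ² = 1), and define Q : ℤ → ℝ by Q[0] = (1 + e^{−2Δα})/(Δ(1 − e^{−2Δα})), Q[h] = −e^{−Δα}/(Δ(1 − e^{−2Δα})) for |h| = 1, and Q[h] = 0 for |h| > 1. Then for every h ∈ ℤ, Δ · Σ_{k∈ℤ} A[h − k] Q[k] = 1 if h = 0 and = 0 otherwise; i.e., Q is the inverse operator of A. -/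
open Real

/-- The explicitly given tridiagonal operator `Q` is the inverse operator of the
exponential (Matérn ν = 1/2, d = 1, σ² = 1) covariance `A[h] = e^{-αΔ|h|}` on a
grid with spacing Δ. -/
theorem exponential_inverse_operator
    (α Δ : ℝ) (hα : 0 < α) (hΔ : 0 < Δ) (A Q : ℤ → ℝ)
    (hA : ∀ h : ℤ, A h = Real.exp (-(α * Δ * |(h : ℝ)|)))
    (hQ0 : Q 0 = (1 + Real.exp (-(2 * Δ * α))) / (Δ * (1 - Real.exp (-(2 * Δ * α)))))
    (hQ1 : ∀ h : ℤ, |h| = 1 →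
      Q h = -Real.exp (-(Δ * α)) / (Δ * (1 - Real.exp (-(2 * Δ * α)))))
    (hQ2 : ∀ h : ℤ, 1 < |h| → Q h = 0) :
    ∀ h : ℤ, Δ * ∑' k : ℤ, A (h - k) * Q k = if h = 0 then 1 else 0 := by
  intro h
  set q := Real.exp (-(α * Δ)) with hq
  have hq0 : 0 < q := Real.exp_pos _
  have hq1 : q < 1 := by
    rw [hq, Real.exp_lt_one_iff]; nlinarith
  have hden : 1 - q ^ 2 ≠ 0 := by nlinarith
  have hexp2 : Real.exp (-(2 * Δ * α)) = q ^ 2 := by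
    rw [hq, ← Real.exp_nat_mul]; congr 1; push_cast; ring
  have hexp1 : Real.exp (-(Δ * α)) = q := by rw [hq]; congr 1; ring
  have hAq : ∀ k : ℤ, A k = q ^ k.natAbs := by
    intro k
    rw [hA, hq, ← Real.exp_nat_mul]
    congr 1
    have : |(k : ℝ)| = (k.natAbs : ℝ) := by
      rw [Nat.cast_natAbs, Int.cast_abs]
    rw [this]; ring
  have hsum : ∑' k : ℤ, A (h - k) * Q k = ∑ k ∈ ({-1, 0, 1} : Finset ℤ), A (h - k) * Q k := by
    apply tsum_eq_sum
    intro k hk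
    simp only [Finset.mem_insert, Finset.mem_singleton] at hk
    push_neg at hk
    rw [hQ2 k (by rcases abs_cases k with ⟨h1, h2⟩ | ⟨h1, h2⟩ <;> omega), mul_zero]
  rw [hsum]
  have hQm1 : Q (-1) = -q / (Δ * (1 - q ^ 2)) := by
    rw [hQ1 (-1) (by decide), hexp1, hexp2]
  have hQp1 : Q 1 = -q / (Δ * (1 - q ^ 2)) := by
    rw [hQ1 1 (by decide), hexp1, hexp2]
  have hsum2 : ∑ k ∈ ({-1, 0, 1} : Finset ℤ), A (h - k) * Q k =
      A (h + 1) * Q (-1) + A h * Q 0 + A (h - 1) * Q 1 := by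
    rw [show ({-1, 0, 1} : Finset ℤ) = {-1} ∪ {0} ∪ {1} by rfl]
    rw [Finset.sum_union (by decide), Finset.sum_union (by decide)]
    simp [sub_neg_eq_add]
  rw [hsum2, hQm1, hQp1, hQ0, hexp2]
  rcases lt_trichotomy h 0 with hneg | rfl | hpos
  · obtain ⟨n, rfl⟩ : ∃ n : ℕ, h = -((n : ℤ) + 1) := ⟨(-h - 1).toNat, by omega⟩
    rw [hAq, hAq, hAq]
    have e1 : (-((n : ℤ) + 1) + 1).natAbs = n := by omega
    have e2 : (-((n : ℤ) + 1)).natAbs = n + 1 := by omega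
    have e3 : (-((n : ℤ) + 1) - 1).natAbs = n + 2 := by omega
    rw [e1, e2, e3, if_neg (by omega)]
    field_simp
    ring
  · rw [hAq, hAq, hAq]
    norm_num
    field_simp
    ring
  · obtain ⟨n, rfl⟩ : ∃ n : ℕ, h = (n : ℤ) + 1 := ⟨(h - 1).toNat, by omega⟩
    rw [hAq, hAq, hAq]
    have e1 : ((n : ℤ) + 1 + 1).natAbs = n + 2 := by omega
    have e2 : ((n : ℤ) + 1).natAbs = n + 1 := by omega
    have e3 : ((n : ℤ) + 1 - 1).natAbs = n := by omega
    rw [e1, e2, e3, if_neg (by omega)]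
    field_simp
    ring
end

section
/- There exist constants C > 0 and δ > 0 such that for all α > 0 and Δ > 0 with αΔ < δ, the aliased Matérn spectral density with ν = 1/2, d = 1 evaluated at the highest frequency 1/(2Δ) satisfies | M_Δ(1/(2Δ); 1/2, 1)/(2/α) − α²Δ²/4 + α⁴Δ⁴/48 | ≤ C α⁶Δ⁶. In particular M_Δ(1/(2Δ); 1/2, 1)/(2/α) = α²Δ²/4 + O(α⁴Δ⁴) as αΔ → 0. -/
open Real

private lemma hasSum_odd_inv_pow {p : ℕ} (hp : 1 < p) {S : ℝ}
    (hS : HasSum (fun n : ℕ => (1 : ℝ) / (n : ℝ) ^ p) S) :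
    HasSum (fun n : ℕ => (1 : ℝ) / (2 * (n : ℝ) + 1) ^ p) ((1 - 1 / 2 ^ p) * S) := by
  have hsummable : Summable (fun n : ℕ => (1 : ℝ) / (2 * (n : ℝ) + 1) ^ p) := by
    have hbase : Summable (fun n : ℕ => (1 : ℝ) / ((n : ℝ) + 1) ^ p) := by
      have := (summable_nat_add_iff (f := fun n : ℕ => (1 : ℝ) / (n : ℝ) ^ p) 1).2
        (summable_one_div_nat_pow.2 hp)
      refine this.congr fun n => ?_
      push_cast
      rfl
    refine Summable.of_nonneg_of_le (fun n => by positivity) (fun n => ?_) hbase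
    have hn : (0 : ℝ) ≤ (n : ℝ) := Nat.cast_nonneg n
    refine one_div_le_one_div_of_le (by positivity) ?_
    exact pow_le_pow_left₀ (by positivity) (by linarith) p
  have he : HasSum (fun k : ℕ => (1 : ℝ) / ((2 * k : ℕ) : ℝ) ^ p) ((1 / 2 ^ p) * S) := by
    have := hS.mul_left ((1 : ℝ) / 2 ^ p)
    refine this.congr_fun fun k => ?_
    push_cast
    rw [mul_pow, div_mul_div_comm, one_mul]
  have ho := hsummable.hasSum
  have ho' : HasSum (fun k : ℕ => (1 : ℝ) / (((2 * k + 1 : ℕ)) : ℝ) ^ p)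
      (∑' n : ℕ, (1 : ℝ) / (2 * (n : ℝ) + 1) ^ p) := by
    refine ho.congr_fun fun k => ?_
    push_cast
    rfl
  have htot := HasSum.even_add_odd (f := fun n : ℕ => (1 : ℝ) / (n : ℝ) ^ p) he ho'
  have huniq := htot.unique hS
  have hval : (∑' n : ℕ, (1 : ℝ) / (2 * (n : ℝ) + 1) ^ p) = (1 - 1 / 2 ^ p) * S := by
    linarith
  rwa [hval] at ho

private lemma hasSum_int_odd (f : ℝ → ℝ) {a : ℝ}
    (h : HasSum (fun n : ℕ => f ((2 * (n : ℝ) + 1) ^ 2)) a) :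
    HasSum (fun k : ℤ => f ((2 * (k : ℝ) + 1) ^ 2)) (2 * a) := by
  rw [two_mul]
  refine HasSum.of_nat_of_neg_add_one ?_ ?_
  · refine h.congr_fun fun n => ?_
    push_cast
    try ring_nf
  · refine h.congr_fun fun n => ?_
    push_cast
    try ring_nf

open Real

/-- Expansion of the aliased Matérn (ν = 1/2, d = 1) spectral density at
the highest frequency `1/(2Δ)`:
`M_Δ(1/(2Δ); 1/2, 1)/(2/α) = α²Δ²/4 - α⁴Δ⁴/48 + O(α⁶Δ⁶)`. -/
theorem matern_half_d1_nyquist_expansion :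
    ∃ C > (0 : ℝ), ∃ δ > (0 : ℝ), ∀ α Δ : ℝ, 0 < α → 0 < Δ → α * Δ < δ →
      |(∑' k : ℤ, 2 * α / (α ^ 2 + 4 * π ^ 2 * (1 / (2 * Δ) + (k : ℝ) / Δ) ^ 2)) / (2 / α)
          - α ^ 2 * Δ ^ 2 / 4 + α ^ 4 * Δ ^ 4 / 48|
        ≤ C * α ^ 6 * Δ ^ 6 := by
  refine ⟨1, one_pos, 1, one_pos, fun α Δ hα hΔ _ => ?_⟩
  have hπ : (0 : ℝ) < π := Real.pi_pos
  obtain ⟨s, hs_def⟩ : ∃ s : ℝ, s = α ^ 2 * Δ ^ 2 := ⟨_, rfl⟩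
  have hs : 0 < s := by rw [hs_def]; positivity
  have hodd : ∀ k : ℤ, (1 : ℝ) ≤ (2 * (k : ℝ) + 1) ^ 2 := by
    intro k
    have h1 : (0 : ℤ) ≤ k * (k + 1) := by
      rcases le_or_gt 0 k with h | h
      · nlinarith
      · nlinarith
    have h1' : (0 : ℝ) ≤ (k : ℝ) * ((k : ℝ) + 1) := by exact_mod_cast h1
    nlinarith
  have hoddpos : ∀ k : ℤ, (0 : ℝ) < (2 * (k : ℝ) + 1) ^ 2 := fun k =>
    lt_of_lt_of_le one_pos (hodd k)
  set r : ℤ → ℝ := fun k =>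
    s ^ 3 / ((s + π ^ 2 * (2 * (k : ℝ) + 1) ^ 2) * (π ^ 2 * (2 * (k : ℝ) + 1) ^ 2) ^ 2)
    with hr_def
  have hr_nonneg : ∀ k, 0 ≤ r k := fun k => by
    have := hoddpos k; positivity
  have h1 : HasSum (fun k : ℤ => s / (π ^ 2 * (2 * (k : ℝ) + 1) ^ 2)) (s / 4) := by
    have hnat : HasSum (fun n : ℕ => s / (π ^ 2 * (2 * (n : ℝ) + 1) ^ 2)) (s / 8) := by
      have := (hasSum_odd_inv_pow (by norm_num) hasSum_zeta_two).mul_left (s / π ^ 2)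
      have hval : s / π ^ 2 * ((1 - 1 / 2 ^ 2) * (π ^ 2 / 6)) = s / 8 := by
        field_simp; ring
      rw [hval] at this
      refine this.congr_fun fun n => ?_
      rw [div_mul_div_comm, mul_one]
    have := hasSum_int_odd (fun x => s / (π ^ 2 * x)) hnat
    rw [show 2 * (s / 8) = s / 4 by ring] at this
    simpa using this
  have h2 : HasSum (fun k : ℤ => s ^ 2 / (π ^ 2 * (2 * (k : ℝ) + 1) ^ 2) ^ 2)
      (s ^ 2 / 48) := by
    have hnat : HasSum (fun n : ℕ => s ^ 2 / (π ^ 2 * (2 * (n : ℝ) + 1) ^ 2) ^ 2)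
        (s ^ 2 / 96) := by
      have := (hasSum_odd_inv_pow (by norm_num) hasSum_zeta_four).mul_left (s ^ 2 / π ^ 4)
      have hval : s ^ 2 / π ^ 4 * ((1 - 1 / 2 ^ 4) * (π ^ 4 / 90)) = s ^ 2 / 96 := by
        field_simp; ring
      rw [hval] at this
      refine this.congr_fun fun n => ?_
      rw [div_mul_div_comm, mul_one, mul_pow]
      ring_nf
    have := hasSum_int_odd (fun x => s ^ 2 / (π ^ 2 * x) ^ 2) hnat
    rw [show 2 * (s ^ 2 / 96) = s ^ 2 / 48 by ring] at this
    simpa using this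
  have hB : HasSum (fun k : ℤ => s ^ 3 / (π ^ 6 * (2 * (k : ℝ) + 1) ^ 2))
      (s ^ 3 / π ^ 4 / 4) := by
    have hnat : HasSum (fun n : ℕ => s ^ 3 / (π ^ 6 * (2 * (n : ℝ) + 1) ^ 2))
        (s ^ 3 / π ^ 4 / 8) := by
      have := (hasSum_odd_inv_pow (by norm_num) hasSum_zeta_two).mul_left (s ^ 3 / π ^ 6)
      have hval : s ^ 3 / π ^ 6 * ((1 - 1 / 2 ^ 2) * (π ^ 2 / 6)) = s ^ 3 / π ^ 4 / 8 := by
        field_simp; ring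
      rw [hval] at this
      refine this.congr_fun fun n => ?_
      rw [div_mul_div_comm, mul_one]
    have := hasSum_int_odd (fun x => s ^ 3 / (π ^ 6 * x)) hnat
    rw [show 2 * (s ^ 3 / π ^ 4 / 8) = s ^ 3 / π ^ 4 / 4 by ring] at this
    simpa using this
  have hr_le : ∀ k : ℤ, r k ≤ s ^ 3 / (π ^ 6 * (2 * (k : ℝ) + 1) ^ 2) := by
    intro k
    have hop := hoddpos k
    have ho1 := hodd k
    rw [hr_def]
    have hcube : π ^ 6 * (2 * (k : ℝ) + 1) ^ 2 ≤ π ^ 6 * ((2 * (k : ℝ) + 1) ^ 2) ^ 3 := by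
      have ht : (2 * (k : ℝ) + 1) ^ 2 ≤ ((2 * (k : ℝ) + 1) ^ 2) ^ 3 := by
        calc (2 * (k : ℝ) + 1) ^ 2 = ((2 * (k : ℝ) + 1) ^ 2) ^ 1 := (pow_one _).symm
          _ ≤ ((2 * (k : ℝ) + 1) ^ 2) ^ 3 := pow_le_pow_right₀ ho1 (by norm_num)
      nlinarith [pow_pos hπ 6]
    have hden : π ^ 6 * (2 * (k : ℝ) + 1) ^ 2
        ≤ (s + π ^ 2 * (2 * (k : ℝ) + 1) ^ 2) * (π ^ 2 * (2 * (k : ℝ) + 1) ^ 2) ^ 2 := by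
      calc π ^ 6 * (2 * (k : ℝ) + 1) ^ 2
          ≤ π ^ 6 * ((2 * (k : ℝ) + 1) ^ 2) ^ 3 := hcube
        _ = (π ^ 2 * (2 * (k : ℝ) + 1) ^ 2) * (π ^ 2 * (2 * (k : ℝ) + 1) ^ 2) ^ 2 := by ring
        _ ≤ (s + π ^ 2 * (2 * (k : ℝ) + 1) ^ 2) * (π ^ 2 * (2 * (k : ℝ) + 1) ^ 2) ^ 2 := by
            have h0 : (0 : ℝ) ≤ (π ^ 2 * (2 * (k : ℝ) + 1) ^ 2) ^ 2 := by positivity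
            nlinarith
    exact div_le_div_of_nonneg_left (by positivity) (by positivity) hden
  have hr_summable : Summable r := by
    refine Summable.of_norm_bounded hB.summable fun k => ?_
    rw [Real.norm_eq_abs, abs_of_nonneg (hr_nonneg k)]
    exact hr_le k
  have hrtsum_le : (∑' k, r k) ≤ s ^ 3 / π ^ 4 / 4 := by
    rw [← hB.tsum_eq]
    exact Summable.tsum_le_tsum hr_le hr_summable hB.summable
  have hrtsum_nonneg : 0 ≤ ∑' k, r k := tsum_nonneg hr_nonneg
  have hG : HasSum (fun k : ℤ => s / (π ^ 2 * (2 * (k : ℝ) + 1) ^ 2)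
        - s ^ 2 / (π ^ 2 * (2 * (k : ℝ) + 1) ^ 2) ^ 2 + r k)
      (s / 4 - s ^ 2 / 48 + ∑' k, r k) := (h1.sub h2).add hr_summable.hasSum
  have hpt : ∀ k : ℤ,
      2 * α / (α ^ 2 + 4 * π ^ 2 * (1 / (2 * Δ) + (k : ℝ) / Δ) ^ 2) / (2 / α)
        = s / (π ^ 2 * (2 * (k : ℝ) + 1) ^ 2)
          - s ^ 2 / (π ^ 2 * (2 * (k : ℝ) + 1) ^ 2) ^ 2 + r k := by
    intro k
    have hop := hoddpos k
    have hden1 : α ^ 2 + 4 * π ^ 2 * (1 / (2 * Δ) + (k : ℝ) / Δ) ^ 2 ≠ 0 := by positivity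
    have hden2 : s + π ^ 2 * (2 * (k : ℝ) + 1) ^ 2 ≠ 0 := by positivity
    have hden3 : π ^ 2 * (2 * (k : ℝ) + 1) ^ 2 ≠ 0 := by positivity
    have hΔ' : Δ ≠ 0 := hΔ.ne'
    have hα' : α ≠ 0 := hα.ne'
    have hstep : 2 * α / (α ^ 2 + 4 * π ^ 2 * (1 / (2 * Δ) + (k : ℝ) / Δ) ^ 2) / (2 / α)
        = s / (s + π ^ 2 * (2 * (k : ℝ) + 1) ^ 2) := by
      have hden2' : α ^ 2 * Δ ^ 2 + π ^ 2 * (2 * (k : ℝ) + 1) ^ 2 ≠ 0 := by positivity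
      rw [hs_def]
      field_simp
      ring
    rw [hstep, hr_def]
    have hk : (2 * (k : ℝ) + 1) ≠ 0 := fun h => by simp [h] at hop
    field_simp
    ring
  have htsum : (∑' k : ℤ, 2 * α / (α ^ 2 + 4 * π ^ 2 * (1 / (2 * Δ) + (k : ℝ) / Δ) ^ 2))
      / (2 / α) = s / 4 - s ^ 2 / 48 + ∑' k, r k := by
    rw [← tsum_div_const, ← hG.tsum_eq]
    exact tsum_congr hpt
  rw [htsum, show α ^ 4 * Δ ^ 4 = s ^ 2 by rw [hs_def]; ring,
    show α ^ 2 * Δ ^ 2 = s from hs_def.symm]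
  rw [show s / 4 - s ^ 2 / 48 + (∑' k, r k) - s / 4 + s ^ 2 / 48 = ∑' k, r k by ring]
  rw [abs_of_nonneg hrtsum_nonneg]
  have hπ4 : (4 : ℝ) ≤ π ^ 4 := by
    have h3 : (3 : ℝ) ≤ π := Real.pi_gt_three.le
    have h81 := pow_le_pow_left₀ (by norm_num : (0 : ℝ) ≤ 3) h3 4
    norm_num at h81
    linarith
  calc (∑' k, r k) ≤ s ^ 3 / π ^ 4 / 4 := hrtsum_le
    _ ≤ s ^ 3 := by
        rw [div_div]
        refine div_le_self (by positivity) ?_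
        linarith
    _ = 1 * α ^ 6 * Δ ^ 6 := by rw [hs_def]; ring
end

section
/- There exist constants C > 0 and δ > 0 such that for all α > 0 and Δ > 0 with αΔ < δ, the aliased Matérn spectral density with ν = 3/2, d = 1 evaluated at frequency 0 satisfies | M_Δ(0; 3/2, 1)/(4/α) − 1 − α⁴Δ⁴/720 + α⁶Δ⁶/15120 | ≤ C α⁸Δ⁸. In particular M_Δ(0; 3/2, 1)/(4/α) = 1 + O(α⁴Δ⁴) as αΔ → 0. -/
open Real Finset

theorem bernoulli'_six' : bernoulli' 6 = 1 / 42 := by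
  have h1 : Nat.choose 6 2 = 15 := by decide
  have h2 : Nat.choose 6 3 = 20 := by decide
  have h3 : Nat.choose 6 4 = 15 := by decide
  have h5 : bernoulli' 5 = 0 := bernoulli'_eq_zero_of_odd (by decide) (by norm_num)
  rw [bernoulli'_def]
  norm_num [sum_range_succ, sum_range_zero, h1, h2, h3, h5]

theorem hasSum_zeta_six' : HasSum (fun n : ℕ => (1:ℝ) / (n : ℝ) ^ 6) (π ^ 6 / 945) := by
  have h := hasSum_zeta_nat (k := 3) (by norm_num)
  norm_num [bernoulli_eq_bernoulli'_of_ne_one, bernoulli'_six', Nat.factorial] at h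
  have : (32:ℝ) * π ^ 6 * (1 / 42) / 720 = π ^ 6 / 945 := by ring
  rw [this] at h
  simpa [one_div] using h

theorem hs_shift {a : ℝ} {p : ℕ} (hp : p ≠ 0)
    (h : HasSum (fun n : ℕ => (1:ℝ) / (n : ℝ) ^ p) a) :
    HasSum (fun n : ℕ => (1:ℝ) / ((n : ℝ) + 1) ^ p) a := by
  have key : HasSum (fun n : ℕ => (1:ℝ) / (((n + 1 : ℕ)) : ℝ) ^ p) a := by
    refine (hasSum_nat_add_iff (f := fun n : ℕ => (1:ℝ) / (n : ℝ) ^ p) 1).mpr ?_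
    simpa [zero_pow hp] using h
  convert key using 2 with n
  push_cast
  ring_nf

theorem aux_id (t m : ℝ) (hm0 : m ≠ 0) (hd0 : t ^ 2 + m ^ 2 ≠ 0) :
    t ^ 4 / (t ^ 2 + m ^ 2) ^ 2
      = t ^ 4 * (1 / m ^ 4) - 2 * t ^ 6 * (1 / m ^ 6)
        + t ^ 8 * (3 * m ^ 2 + 2 * t ^ 2) / (m ^ 6 * (t ^ 2 + m ^ 2) ^ 2) := by
  field_simp
  ring

theorem aux_le (t m : ℝ) (ht : 0 < t) (ht1 : t ≤ 1) (h1 : 1 ≤ m) :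
    t ^ 8 * (3 * m ^ 2 + 2 * t ^ 2) / (m ^ 6 * (t ^ 2 + m ^ 2) ^ 2)
      ≤ 5 * t ^ 8 * (1 / m ^ 2) := by
  have hm0 : (0:ℝ) < m := by linarith
  have hden : (0:ℝ) < m ^ 6 * (t ^ 2 + m ^ 2) ^ 2 := by positivity
  rw [div_le_iff₀ hden]
  have e1 : 5 * t ^ 8 * (1 / m ^ 2) * (m ^ 6 * (t ^ 2 + m ^ 2) ^ 2)
      = 5 * t ^ 8 * (m ^ 4 * (t ^ 2 + m ^ 2) ^ 2) := by
    field_simp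
  rw [e1]
  have ht2 : t ^ 2 ≤ 1 := by nlinarith
  have hm2 : (1:ℝ) ≤ m ^ 2 := by nlinarith
  have hc1 : (1:ℝ) ≤ (t ^ 2 + m ^ 2) ^ 2 := by nlinarith [sq_nonneg t]
  have hm4 : m ^ 2 ≤ m ^ 4 := by nlinarith
  have hc2 : m ^ 2 ≤ m ^ 4 * (t ^ 2 + m ^ 2) ^ 2 := by
    nlinarith [pow_pos hm0 4]
  nlinarith [mul_le_mul_of_nonneg_left hc2 (by positivity : (0:ℝ) ≤ 5 * t ^ 8),
    mul_le_mul_of_nonneg_left (le_trans ht2 hm2) (by positivity : (0:ℝ) ≤ 2 * t ^ 8),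
    mul_le_mul_of_nonneg_left hm2 (by positivity : (0:ℝ) ≤ 3 * t ^ 8)]

theorem key_bound (t : ℝ) (ht : 0 < t) (ht1 : t ≤ 1) :
    |(∑' k : ℤ, t ^ 4 / (t ^ 2 + (k : ℝ) ^ 2) ^ 2)
        - 1 - 2 * (π ^ 4 / 90) * t ^ 4 + 4 * (π ^ 6 / 945) * t ^ 6| ≤ 20 * t ^ 8 := by
  have h2 := hs_shift (p := 2) two_ne_zero hasSum_zeta_two
  have h4 := hs_shift (p := 4) (by norm_num) hasSum_zeta_four
  have h6 := hs_shift (p := 6) (by norm_num) hasSum_zeta_six'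
  have hm : ∀ n : ℕ, (1:ℝ) ≤ (n : ℝ) + 1 := by
    intro n; have := Nat.cast_nonneg (α := ℝ) n; linarith
  set f : ℤ → ℝ := fun k => t ^ 4 / (t ^ 2 + (k : ℝ) ^ 2) ^ 2 with hf
  set r : ℕ → ℝ := fun n =>
    t ^ 8 * (3 * ((n : ℝ) + 1) ^ 2 + 2 * t ^ 2)
      / (((n : ℝ) + 1) ^ 6 * (t ^ 2 + ((n : ℝ) + 1) ^ 2) ^ 2) with hrdef
  have hr_nonneg : ∀ n, 0 ≤ r n := by
    intro n
    have h1 := hm n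
    have hden : (0:ℝ) < ((n : ℝ) + 1) ^ 6 * (t ^ 2 + ((n : ℝ) + 1) ^ 2) ^ 2 := by positivity
    simp only [hrdef]
    positivity
  have hr_le : ∀ n, r n ≤ 5 * t ^ 8 * (1 / ((n : ℝ) + 1) ^ 2) :=
    fun n => aux_le t ((n : ℝ) + 1) ht ht1 (hm n)
  have hsum_bound : Summable (fun n : ℕ => 5 * t ^ 8 * (1 / ((n : ℝ) + 1) ^ 2)) :=
    h2.summable.mul_left _
  have hsum_r : Summable r := Summable.of_nonneg_of_le hr_nonneg hr_le hsum_bound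
  set R : ℝ := ∑' n, r n with hRdef
  have hR_nonneg : 0 ≤ R := tsum_nonneg hr_nonneg
  have hR_le : R ≤ 5 * t ^ 8 * (π ^ 2 / 6) := by
    have h := Summable.tsum_le_tsum hr_le hsum_r hsum_bound
    calc R ≤ ∑' n : ℕ, 5 * t ^ 8 * (1 / ((n : ℝ) + 1) ^ 2) := h
      _ = 5 * t ^ 8 * (π ^ 2 / 6) := by rw [tsum_mul_left, h2.tsum_eq]
  have hR10 : R ≤ 10 * t ^ 8 := by
    have hpisq : π ^ 2 ≤ 12 := by nlinarith [pi_lt_d2, pi_pos]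
    nlinarith [mul_le_mul_of_nonneg_left hpisq (by positivity : (0:ℝ) ≤ t ^ 8)]
  have hfid : ∀ n : ℕ, f ((n : ℤ) + 1)
      = t ^ 4 * (1 / ((n : ℝ) + 1) ^ 4) - 2 * t ^ 6 * (1 / ((n : ℝ) + 1) ^ 6) + r n := by
    intro n
    have h1 := hm n
    have hm0 : ((n : ℝ) + 1) ≠ 0 := by linarith
    have hd0 : t ^ 2 + ((n : ℝ) + 1) ^ 2 ≠ 0 := by positivity
    have hcast : ((((n : ℤ) + 1) : ℤ) : ℝ) = (n : ℝ) + 1 := by push_cast; ring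
    show t ^ 4 / (t ^ 2 + ((((n : ℤ) + 1) : ℤ) : ℝ) ^ 2) ^ 2 = _
    rw [hcast]
    exact aux_id t ((n : ℝ) + 1) hm0 hd0
  have hneg : ∀ n : ℕ, f (-((n : ℤ) + 1)) = f ((n : ℤ) + 1) := by
    intro n
    have hc : (((-((n : ℤ) + 1)) : ℤ) : ℝ) ^ 2 = ((((n : ℤ) + 1) : ℤ) : ℝ) ^ 2 := by
      push_cast; ring
    show t ^ 4 / (t ^ 2 + (((-((n : ℤ) + 1)) : ℤ) : ℝ) ^ 2) ^ 2 = _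
    rw [hc]
  set S : ℝ := t ^ 4 * (π ^ 4 / 90) - 2 * t ^ 6 * (π ^ 6 / 945) + R with hSdef
  have hF : HasSum (fun n : ℕ => f ((n : ℤ) + 1)) S := by
    have h := ((h4.mul_left (t ^ 4)).sub (h6.mul_left (2 * t ^ 6))).add hsum_r.hasSum
    simp only [hfid]
    exact h
  have hFneg : HasSum (fun n : ℕ => f (-((n : ℤ) + 1))) S := by
    simp only [hneg]; exact hF
  have f0 : f 0 = 1 := by
    show t ^ 4 / (t ^ 2 + (((0:ℤ)) : ℝ) ^ 2) ^ 2 = 1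
    rw [show (t ^ 2 + (((0:ℤ)) : ℝ) ^ 2) ^ 2 = t ^ 4 by push_cast; ring]
    exact div_self (pow_ne_zero _ ht.ne')
  have htot : HasSum f (S + f 0 + S) := hF.of_add_one_of_neg_add_one hFneg
  rw [htot.tsum_eq, f0, hSdef]
  have heq : t ^ 4 * (π ^ 4 / 90) - 2 * t ^ 6 * (π ^ 6 / 945) + R + 1
      + (t ^ 4 * (π ^ 4 / 90) - 2 * t ^ 6 * (π ^ 6 / 945) + R)
      - 1 - 2 * (π ^ 4 / 90) * t ^ 4 + 4 * (π ^ 6 / 945) * t ^ 6 = 2 * R := by ring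
  rw [heq, abs_of_nonneg (by linarith)]
  linarith

/-- Expansion of the aliased Matérn (ν = 3/2, d = 1) spectral density at
frequency 0: `M_Δ(0; 3/2, 1)/(4/α) = 1 + α⁴Δ⁴/720 - α⁶Δ⁶/15120 + O(α⁸Δ⁸)`. -/
theorem matern_threehalves_d1_freq_zero_expansion :
    ∃ C > (0 : ℝ), ∃ δ > (0 : ℝ), ∀ α Δ : ℝ, 0 < α → 0 < Δ → α * Δ < δ →
      |(∑' k : ℤ, 4 * α ^ 3 / (α ^ 2 + 4 * π ^ 2 * ((0 : ℝ) + (k : ℝ) / Δ) ^ 2) ^ 2) / (4 / α)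
          - 1 - α ^ 4 * Δ ^ 4 / 720 + α ^ 6 * Δ ^ 6 / 15120|
        ≤ C * α ^ 8 * Δ ^ 8 := by
  refine ⟨20, by norm_num, 1, by norm_num, ?_⟩
  intro α Δ hα hΔ hδ
  have hπ : (0:ℝ) < π := pi_pos
  set t : ℝ := α * Δ / (2 * π) with htdef
  have ht : 0 < t := by positivity
  have htle : t ≤ α * Δ := by
    rw [htdef]
    exact div_le_self (by positivity) (by nlinarith [pi_gt_three])
  have ht1 : t ≤ 1 := le_trans htle (le_of_lt hδ)
  have hsum_eq : (∑' k : ℤ, 4 * α ^ 3 / (α ^ 2 + 4 * π ^ 2 * ((0 : ℝ) + (k : ℝ) / Δ) ^ 2) ^ 2)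
        / (4 / α)
      = ∑' k : ℤ, t ^ 4 / (t ^ 2 + (k : ℝ) ^ 2) ^ 2 := by
    rw [← tsum_div_const]
    refine tsum_congr fun k => ?_
    have hd1 : (0:ℝ) < α ^ 2 + 4 * π ^ 2 * ((0 : ℝ) + (k : ℝ) / Δ) ^ 2 := by positivity
    have hd2' : (0:ℝ) < (α * Δ / (2 * π)) ^ 2 + (k : ℝ) ^ 2 := by positivity
    rw [htdef]
    rw [div_div_eq_mul_div, div_mul_eq_mul_div, mul_comm]
    rw [div_eq_div_iff (by positivity) (by positivity)]
    field_simp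
    ring
  rw [hsum_eq]
  have e4 : α ^ 4 * Δ ^ 4 / 720 = 2 * (π ^ 4 / 90) * t ^ 4 := by
    rw [htdef]; field_simp; ring
  have e6 : α ^ 6 * Δ ^ 6 / 15120 = 4 * (π ^ 6 / 945) * t ^ 6 := by
    rw [htdef]; field_simp; ring
  rw [e4, e6]
  refine le_trans (key_bound t ht ht1) ?_
  have hp8 : t ^ 8 ≤ (α * Δ) ^ 8 := pow_le_pow_left₀ ht.le htle 8
  calc (20:ℝ) * t ^ 8 ≤ 20 * (α * Δ) ^ 8 := by linarith
    _ = 20 * α ^ 8 * Δ ^ 8 := by ring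
end

section
/- There exist constants C > 0 and δ > 0 such that for all α > 0 and Δ > 0 with αΔ < δ, the SPDE approximation to the ν = 3/2, d = 1 spectral density at frequency 1/(2Δ) satisfies | M̃_Δ(1/(2Δ); 3/2, 1)/(4/α) − α⁴Δ⁴/16 + α⁶Δ⁶/32 | ≤ C α⁸Δ⁸, while M̃_Δ(0; 3/2, 1)/(4/α) = 1 exactly. -/
open Real

/-- Expansion of the SPDE approximation to the Matérn (ν = 3/2, d = 1) spectral
density at the highest frequency `1/(2Δ)`, where
`M̃_Δ(1/(2Δ); 3/2, 1) = αΔ²/(αΔ/2 + 2/(αΔ))²`: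
`M̃_Δ(1/(2Δ); 3/2, 1)/(4/α) = α⁴Δ⁴/16 - α⁶Δ⁶/32 + O(α⁸Δ⁸)`,
while at frequency 0, `M̃_Δ(0; 3/2, 1)/(4/α) = 1` exactly, where
`M̃_Δ(0; 3/2, 1) = αΔ²/(αΔ/2 + 1/(αΔ) - 1/(2αΔ) - 1/(2αΔ))²`. -/
theorem spde_threehalves_d1_expansion :
    ∃ C > (0 : ℝ), ∃ δ > (0 : ℝ), ∀ α Δ : ℝ, 0 < α → 0 < Δ → α * Δ < δ →
      |(α * Δ ^ 2 / (α * Δ / 2 + 2 / (α * Δ)) ^ 2) / (4 / α)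
          - α ^ 4 * Δ ^ 4 / 16 + α ^ 6 * Δ ^ 6 / 32| ≤ C * α ^ 8 * Δ ^ 8
      ∧ (α * Δ ^ 2 / (α * Δ / 2 + 1 / (α * Δ) - 1 / (2 * α * Δ) - 1 / (2 * α * Δ)) ^ 2)
          / (4 / α) = 1 := by
  refine ⟨1, one_pos, 1, one_pos, fun α Δ hα hΔ hδ => ?_⟩
  have hx : 0 < α * Δ := mul_pos hα hΔ
  have hxne : α * Δ ≠ 0 := ne_of_gt hx
  have hαne : α ≠ 0 := ne_of_gt hα
  have hΔne : Δ ≠ 0 := ne_of_gt hΔ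
  constructor
  · have hden : α * Δ / 2 + 2 / (α * Δ) = ((α * Δ) ^ 2 + 4) / (2 * (α * Δ)) := by
      field_simp; ring
    have hd2 : (α * Δ) ^ 2 + 4 ≠ 0 := by positivity
    have key : (α * Δ ^ 2 / (α * Δ / 2 + 2 / (α * Δ)) ^ 2) / (4 / α)
          - α ^ 4 * Δ ^ 4 / 16 + α ^ 6 * Δ ^ 6 / 32
        = (α * Δ) ^ 8 * (6 + (α * Δ) ^ 2) / (32 * ((α * Δ) ^ 2 + 4) ^ 2) := by
      rw [hden]
      field_simp
      ring
    rw [key, abs_of_nonneg (by positivity)]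
    have h1 : (α * Δ) ^ 8 * (6 + (α * Δ) ^ 2) ≤ (α * Δ) ^ 8 * 7 := by
      apply mul_le_mul_of_nonneg_left _ (by positivity)
      nlinarith [sq_nonneg (α * Δ)]
    have h2 : (512 : ℝ) ≤ 32 * ((α * Δ) ^ 2 + 4) ^ 2 := by nlinarith [sq_nonneg (α * Δ)]
    have h3 : (α * Δ) ^ 8 * (6 + (α * Δ) ^ 2) / (32 * ((α * Δ) ^ 2 + 4) ^ 2)
        ≤ (α * Δ) ^ 8 * 7 / 512 := by
      apply div_le_div₀ (by positivity) h1 (by norm_num) h2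
    calc (α * Δ) ^ 8 * (6 + (α * Δ) ^ 2) / (32 * ((α * Δ) ^ 2 + 4) ^ 2)
        ≤ (α * Δ) ^ 8 * 7 / 512 := h3
      _ ≤ 1 * α ^ 8 * Δ ^ 8 := by nlinarith [pow_pos hx 8, mul_pow α Δ 8]
  · have hden : α * Δ / 2 + 1 / (α * Δ) - 1 / (2 * α * Δ) - 1 / (2 * α * Δ) = α * Δ / 2 := by
      field_simp; ring
    rw [hden]
    field_simp
    ring
end

section
/- Let S₀ = Σ_{k∈ℤ², k≠(0,0)} (k₁² + k₂²)^{−2}. There exist constants C > 0 and δ > 0 such that for all α > 0 and Δ > 0 with αΔ < δ, the aliased two-dimensional Matérn spectral density with ν = 1 at frequency (0,0) satisfies | M_Δ((0,0); 1, 2)/(4π/α²) − 1 − (S₀/(16π⁴)) α⁴Δ⁴ | ≤ C α⁶Δ⁶. (Numerically 16π⁴/S₀ ≈ 258.602.) -/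
open Real

/-- `S₀ = Σ_{k∈ℤ², k≠(0,0)} (k₁² + k₂²)^{-2}`. -/
noncomputable def S0 : ℝ :=
  ∑' k : ℤ × ℤ, if k = (0, 0) then 0 else 1 / ((k.1 : ℝ) ^ 2 + (k.2 : ℝ) ^ 2) ^ 2

/-- Key elementary estimate: `|t⁴/(t²+a)² - t⁴/a²| ≤ 3 t⁶ / a³` when `t² ≤ a`. -/
lemma matern_key (t a : ℝ) (ht : 0 ≤ t) (ha : 0 < a) (h1 : t^2 ≤ a) :
    |t^4/(t^2+a)^2 - t^4/a^2| ≤ 3*t^6/a^3 := by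
  have hta : 0 < t^2 + a := by positivity
  have h2 : t^4/(t^2+a)^2 ≤ t^4/a^2 :=
    div_le_div_of_nonneg_left (by positivity) (by positivity) (by nlinarith [sq_nonneg t])
  rw [abs_sub_comm, abs_of_nonneg (by linarith)]
  rw [div_sub_div _ _ (by positivity) (by positivity),
    div_le_div_iff₀ (by positivity) (by positivity)]
  nlinarith [mul_le_mul_of_nonneg_right h1 (show (0:ℝ) ≤ t^6*a^3 by positivity),
    sq_nonneg t, pow_pos ha 3,
    mul_nonneg (mul_nonneg (pow_nonneg ht 6) (sq_nonneg a)) (sq_nonneg t)]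

/-- `∑_{n∈ℤ} 1/(1+n²)` converges. -/
lemma matern_summable_int : Summable (fun n : ℤ => 1/(1+(n:ℝ)^2)) := by
  have hnat : Summable (fun n : ℕ => 1/(1+(n:ℝ)^2)) := by
    have h0 : Summable (fun n : ℕ => 1/((n:ℝ))^2) :=
      summable_one_div_nat_pow.mpr one_lt_two
    have h1 : Summable (fun n : ℕ => 1/(((n:ℝ)+1))^2) := by
      have := (summable_nat_add_iff (f := fun n : ℕ => 1/((n:ℝ))^2) 1).mpr h0
      simpa using this
    refine Summable.of_nonneg_of_le (fun n => by positivity) (fun n => ?_)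
      (h1.mul_left 2)
    have h2 : 2*(1/((n:ℝ)+1)^2) = 2/((n:ℝ)+1)^2 := by ring
    rw [h2, div_le_div_iff₀ (by positivity) (by positivity)]
    nlinarith [sq_nonneg ((n:ℝ)-1)]
  refine Summable.of_nat_of_neg (hnat.congr (fun n => by push_cast; ring))
    (hnat.congr (fun n => by push_cast; ring))

lemma matern_q_ge_one {k : ℤ × ℤ} (hk : k ≠ (0,0)) :
    (1:ℝ) ≤ (k.1:ℝ)^2 + (k.2:ℝ)^2 := by
  have h : k.1 ≠ 0 ∨ k.2 ≠ 0 := by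
    by_contra h; push_neg at h
    exact hk (Prod.ext h.1 h.2)
  rcases h with h | h
  · have h1 : (1:ℤ) ≤ k.1^2 := by
      have := Int.one_le_abs (by simpa using h)
      nlinarith [abs_nonneg k.1, sq_abs k.1]
    have h1' : (1:ℝ) ≤ (k.1:ℝ)^2 := by exact_mod_cast h1
    nlinarith [sq_nonneg (k.2:ℝ)]
  · have h1 : (1:ℤ) ≤ k.2^2 := by
      have := Int.one_le_abs (by simpa using h)
      nlinarith [abs_nonneg k.2, sq_abs k.2]
    have h1' : (1:ℝ) ≤ (k.2:ℝ)^2 := by exact_mod_cast h1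
    nlinarith [sq_nonneg (k.1:ℝ)]

/-- Summability of the lattice sum defining `S0`. -/
lemma matern_summable_S0 :
    Summable (fun k : ℤ × ℤ =>
      if k = (0, 0) then 0 else 1 / ((k.1 : ℝ) ^ 2 + (k.2 : ℝ) ^ 2) ^ 2) := by
  have hb : Summable (fun k : ℤ × ℤ =>
      (3:ℝ) * ((1/(1+(k.1:ℝ)^2)) * (1/(1+(k.2:ℝ)^2)))) :=
    (Summable.mul_of_nonneg matern_summable_int matern_summable_int
      (fun n => by positivity) (fun n => by positivity)).mul_left 3
  refine Summable.of_nonneg_of_le (fun k => ?_) (fun k => ?_) hb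
  · split_ifs <;> positivity
  · split_ifs with h
    · positivity
    · set a := (k.1:ℝ)^2 with ha
      set b := (k.2:ℝ)^2 with hb2
      have hq : (1:ℝ) ≤ a + b := matern_q_ge_one h
      have ha0 : 0 ≤ a := sq_nonneg _
      have hb0 : 0 ≤ b := sq_nonneg _
      rw [show (3:ℝ) * ((1/(1+a)) * (1/(1+b))) = 3/((1+a)*(1+b)) by
        field_simp]
      rw [div_le_div_iff₀ (by positivity) (by positivity)]
      nlinarith [sq_nonneg (a-b), sq_nonneg (a+b)]

lemma matern_S0_nonneg : 0 ≤ S0 := by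
  refine tsum_nonneg (fun k => ?_)
  split_ifs <;> positivity

set_option maxHeartbeats 1000000 in
/-- Expansion of the aliased two-dimensional Matérn (ν = 1) spectral density at
frequency (0,0): `M_Δ((0,0); 1, 2)/(4π/α²) = 1 + (S₀/(16π⁴)) α⁴Δ⁴ + O(α⁶Δ⁶)`. -/
theorem matern_one_d2_freq_zero_expansion :
    ∃ C > (0 : ℝ), ∃ δ > (0 : ℝ), ∀ α Δ : ℝ, 0 < α → 0 < Δ → α * Δ < δ →
      |(4 * π * α ^ 2 * ∑' k : ℤ × ℤ,
            1 / (α ^ 2 + 4 * π ^ 2 * ((0 : ℝ) + (k.1 : ℝ) / Δ) ^ 2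
                + 4 * π ^ 2 * ((0 : ℝ) + (k.2 : ℝ) / Δ) ^ 2) ^ 2) / (4 * π / α ^ 2)
          - 1 - (S0 / (16 * π ^ 4)) * α ^ 4 * Δ ^ 4|
        ≤ C * α ^ 6 * Δ ^ 6 := by
  have hπ : 0 < π := pi_pos
  have hπ3 : 3 < π := pi_gt_three
  have hS0 : 0 ≤ S0 := matern_S0_nonneg
  refine ⟨3*S0/(64*π^6) + 1, by positivity, 1, one_pos, fun α Δ hα hΔ htδ => ?_⟩
  set t : ℝ := α * Δ with htdef
  have ht : 0 < t := mul_pos hα hΔ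
  have ht1 : t < 1 := htδ
  set q : ℤ × ℤ → ℝ := fun k => (k.1:ℝ)^2 + (k.2:ℝ)^2 with hqdef
  have hq0 : ∀ k, 0 ≤ q k := fun k => by positivity
  have hq1 : ∀ k, k ≠ (0,0) → (1:ℝ) ≤ q k := fun k hk => matern_q_ge_one hk
  set P : ℤ × ℤ → ℝ := fun k => t^4 / (t^2 + 4*π^2 * q k)^2 with hPdef
  have hden : ∀ k : ℤ × ℤ, 0 < t^2 + 4*π^2 * q k := fun k => by
    have := hq0 k; positivity
  -- rewrite each summand
  have hFP : ∀ k : ℤ × ℤ,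
      (1 / (α ^ 2 + 4 * π ^ 2 * ((0 : ℝ) + (k.1 : ℝ) / Δ) ^ 2
          + 4 * π ^ 2 * ((0 : ℝ) + (k.2 : ℝ) / Δ) ^ 2) ^ 2)
        = (1/α^4) * P k := by
    intro k
    have hd1 : 0 < α ^ 2 + 4 * π ^ 2 * ((0 : ℝ) + (k.1 : ℝ) / Δ) ^ 2
        + 4 * π ^ 2 * ((0 : ℝ) + (k.2 : ℝ) / Δ) ^ 2 := by positivity
    have hd2 := hden k
    rw [hPdef]
    simp only [hqdef]
    rw [div_mul_div_comm, one_mul]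
    rw [div_eq_div_iff (by positivity) (by positivity)]
    have hne : (Δ:ℝ) ≠ 0 := ne_of_gt hΔ
    field_simp [htdef]
    ring
  -- P at the origin is 1
  have hq00 : q (0,0) = 0 := by simp [hqdef]
  have htne : t ≠ 0 := ht.ne'
  have hP0 : P (0,0) = 1 := by
    simp only [hPdef, hq00, mul_zero, add_zero]
    field_simp
  -- auxiliary functions
  set Sfun : ℤ × ℤ → ℝ := fun k => if k = (0,0) then 0 else 1/(q k)^2 with hSfundef
  have hSsum : Summable Sfun := matern_summable_S0
  have hS0eq : S0 = ∑' k, Sfun k := rfl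
  set c1 : ℝ := t^4/(16*π^4) with hc1def
  set c2 : ℝ := 3*t^6/(64*π^6) with hc2def
  have hc1 : 0 ≤ c1 := by positivity
  set Q : ℤ × ℤ → ℝ := fun k => if k = (0,0) then 0 else P k with hQdef
  have hQ0 : ∀ k, 0 ≤ Q k := by
    intro k
    simp only [hQdef]
    split_ifs
    · exact le_refl _
    · have := hden k; positivity
  have hQle : ∀ k, Q k ≤ c1 * Sfun k := by
    intro k
    simp only [hQdef, hSfundef]
    split_ifs with hk
    · simp
    · have hqk := hq1 k hk
      have e1 : c1 * (1/(q k)^2) = t^4/(4*π^2*q k)^2 := by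
        rw [hc1def]; field_simp; ring
      rw [e1, hPdef]
      apply div_le_div_of_nonneg_left (by positivity) (by positivity)
      exact pow_le_pow_left₀ (by positivity) (by nlinarith [sq_nonneg t]) 2
  have hQsum : Summable Q := Summable.of_nonneg_of_le hQ0 hQle (hSsum.mul_left c1)
  have hRsum : Summable (fun k => c1 * Sfun k) := hSsum.mul_left c1
  -- split off the origin
  have hPsum_eq : (∑' k, P k) = 1 + ∑' k, Q k := by
    have hupd : Function.update P (0,0) 0 = Q := by
      funext k
      rw [Function.update_apply]
    rw [Summable.tsum_eq_add_tsum_ite' ((0,0) : ℤ × ℤ) (hupd ▸ hQsum), hP0]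
  -- the ratio equals ∑' P
  have hratio : (4 * π * α ^ 2 * ∑' k : ℤ × ℤ,
            1 / (α ^ 2 + 4 * π ^ 2 * ((0 : ℝ) + (k.1 : ℝ) / Δ) ^ 2
                + 4 * π ^ 2 * ((0 : ℝ) + (k.2 : ℝ) / Δ) ^ 2) ^ 2) / (4 * π / α ^ 2)
      = ∑' k, P k := by
    rw [tsum_congr hFP, tsum_mul_left]
    have hαne : α ≠ 0 := hα.ne'
    have hπne : π ≠ 0 := hπ.ne'
    field_simp
  -- termwise bound
  have hterm : ∀ k, |Q k - c1 * Sfun k| ≤ c2 * Sfun k := by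
    intro k
    simp only [hQdef, hSfundef]
    split_ifs with hk
    · simp
    · have hqk := hq1 k hk
      have ha : 0 < 4*π^2 * q k := by positivity
      have ht2 : t^2 ≤ 1 := by
        nlinarith [mul_pos (sub_pos.mpr ht1) (show (0:ℝ) < 1 + t by linarith)]
      have h1 : t^2 ≤ 4*π^2*q k := by
        nlinarith [sq_nonneg (π-3),
          mul_nonneg (show (0:ℝ) ≤ 4*π^2 by positivity) (show (0:ℝ) ≤ q k - 1 by linarith)]
      have e1 : c1 * (1/(q k)^2) = t^4/(4*π^2*q k)^2 := by
        rw [hc1def]; field_simp; ring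
      have e2 : c2 * (1/(q k)^2) = 3*t^6/(64*π^6*(q k)^2) := by
        rw [hc2def]; field_simp
      rw [e1, e2, hPdef]
      refine (matern_key t (4*π^2*q k) ht.le ha h1).trans ?_
      rw [show (4*π^2*q k)^3 = 64*π^6*(q k)^3 by ring]
      apply div_le_div_of_nonneg_left (by positivity) (by positivity)
      exact mul_le_mul_of_nonneg_left (pow_le_pow_right₀ hqk (by norm_num)) (by positivity)
  have habs_sum : Summable (fun k => |Q k - c1 * Sfun k|) :=
    Summable.of_nonneg_of_le (fun k => abs_nonneg _) hterm (hSsum.mul_left c2)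
  have hmain : |(∑' k, Q k) - ∑' k, (c1 * Sfun k)| ≤ c2 * S0 := by
    rw [← Summable.tsum_sub hQsum hRsum]
    calc |∑' k, (Q k - c1 * Sfun k)| ≤ ∑' k, |Q k - c1 * Sfun k| := by
          simpa [Real.norm_eq_abs] using
            norm_tsum_le_tsum_norm (f := fun k => Q k - c1 * Sfun k)
              (by simpa [Real.norm_eq_abs] using habs_sum)
      _ ≤ ∑' k, c2 * Sfun k := Summable.tsum_le_tsum hterm habs_sum (hSsum.mul_left c2)
      _ = c2 * S0 := by rw [tsum_mul_left, ← hS0eq]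
  -- put everything together
  rw [hratio, hPsum_eq]
  have hRS : (∑' k, (c1 * Sfun k)) = c1 * S0 := by rw [tsum_mul_left, ← hS0eq]
  have hgoal1 : 1 + (∑' k, Q k) - 1 - S0 / (16 * π ^ 4) * α ^ 4 * Δ ^ 4
      = (∑' k, Q k) - ∑' k, (c1 * Sfun k) := by
    rw [hRS, hc1def, htdef]; ring
  rw [hgoal1]
  refine hmain.trans ?_
  have h6 : t^6 = α^6 * Δ^6 := by rw [htdef]; ring
  have : c2 * S0 = (3*S0/(64*π^6)) * (α^6*Δ^6) := by
    rw [hc2def, ← h6]; ring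
  rw [this]
  nlinarith [pow_pos hα 6, pow_pos hΔ 6, mul_pos (pow_pos hα 6) (pow_pos hΔ 6)]
end

section
/- Let S₂ = Σ_{k∈ℤ²} [(2k₁ + 1)² + (2k₂ + 1)²]^{−2}. There exist constants C > 0 and δ > 0 such that for all α > 0 and Δ > 0 with αΔ < δ, the aliased two-dimensional Matérn spectral density with ν = 1 at frequency (1/(2Δ), 1/(2Δ)) satisfies | M_Δ((1/(2Δ), 1/(2Δ)); 1, 2)/(4π/α²) − (S₂/π⁴) α⁴Δ⁴ | ≤ C α⁶Δ⁶. (Numerically π⁴/S₂ ≈ 86.2007.) -/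
open Real

private lemma one_le_oddsq (k : ℤ) : (1:ℝ) ≤ (2 * (k : ℝ) + 1) ^ 2 := by
  have h : (1:ℤ) ≤ (2*k+1)^2 := by
    have h0 : 2*k+1 ≠ 0 := by omega
    have := Int.one_le_abs h0
    calc (1:ℤ) = 1*1 := by ring
    _ ≤ |2*k+1| * |2*k+1| := by exact mul_le_mul this this (by norm_num) (by positivity)
    _ = (2*k+1)^2 := by rw [← abs_mul, ← sq, abs_sq]
  calc (1:ℝ) ≤ (((2*k+1)^2 : ℤ) : ℝ) := by exact_mod_cast h
  _ = _ := by push_cast; ring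

private lemma sum_odd : Summable (fun k : ℤ => 1/(2*(k:ℝ)+1)^2) := by
  have h : Summable (fun n : ℤ => 1/(n:ℝ)^2) := Real.summable_one_div_int_pow.mpr one_lt_two
  have hinj : Function.Injective (fun k : ℤ => 2*k+1) := by intro a b hab; simpa using hab
  refine (h.comp_injective hinj).congr fun k => ?_
  simp only [Function.comp]
  push_cast; ring_nf

private lemma S2_summable :
    Summable (fun k : ℤ × ℤ => 1 / ((2 * (k.1 : ℝ) + 1) ^ 2 + (2 * (k.2 : ℝ) + 1) ^ 2) ^ 2) := by
  have h := sum_odd.mul_of_nonneg sum_odd (fun k => by positivity) (fun k => by positivity)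
  refine h.of_nonneg_of_le (fun k => by positivity) (fun k => ?_)
  have ha := one_le_oddsq k.1
  have hb := one_le_oddsq k.2
  rw [one_div_mul_one_div]
  apply one_div_le_one_div_of_le (by nlinarith)
  nlinarith

private lemma term_bound (t Q P : ℝ) (ht : 0 ≤ t) (ht1 : t ^ 2 ≤ 1) (hQ : 2 ≤ Q) (hP : 9 ≤ P) :
    1 / (P * Q) ^ 2 - 1 / (t ^ 2 + P * Q) ^ 2 ≤ 3 * t ^ 2 / (2 * P ^ 3) * (1 / Q ^ 2) := by
  have hQ0 : (0:ℝ) < Q := by linarith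
  have hP0 : (0:ℝ) < P := by linarith
  have hPQ : (0:ℝ) < P * Q := mul_pos hP0 hQ0
  have hX : (0:ℝ) < t ^ 2 + P * Q := by nlinarith [sq_nonneg t]
  have key : 1 / (P * Q) ^ 2 - 1 / (t ^ 2 + P * Q) ^ 2
      = t ^ 2 * (t ^ 2 + 2 * P * Q) / ((P * Q) ^ 2 * (t ^ 2 + P * Q) ^ 2) := by
    field_simp
    ring
  have rhs : 3 * t ^ 2 / (2 * P ^ 3) * (1 / Q ^ 2) = 3 * t ^ 2 / (2 * P ^ 3 * Q ^ 2) := by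
    rw [div_mul_div_comm, mul_one]
  rw [key, rhs, div_le_div_iff₀ (mul_pos (pow_pos hPQ 2) (pow_pos hX 2)) (by positivity)]
  have hu : (0:ℝ) ≤ t ^ 2 := sq_nonneg t
  have h3 : 2 * P * (t ^ 2 + 2 * P * Q) ≤ 3 * (t ^ 2 + P * Q) ^ 2 := by
    have hA : (0:ℝ) ≤ P * (1 - t ^ 2) := mul_nonneg hP0.le (by linarith)
    have hB : (0:ℝ) ≤ P ^ 2 * Q * (Q - 2) := mul_nonneg (by positivity) (by linarith)
    have hC : 18 * P ≤ P ^ 2 * Q := by nlinarith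
    have hD : (0:ℝ) ≤ t ^ 2 * P * Q := by positivity
    nlinarith [sq_nonneg t]
  nlinarith [mul_le_mul_of_nonneg_left h3 (show (0:ℝ) ≤ t ^ 2 * P ^ 2 * Q ^ 2 by positivity)]

/-- `S₂ = Σ_{k∈ℤ²} [(2k₁ + 1)² + (2k₂ + 1)²]^{-2}`. -/
noncomputable def S2 : ℝ :=
  ∑' k : ℤ × ℤ, 1 / ((2 * (k.1 : ℝ) + 1) ^ 2 + (2 * (k.2 : ℝ) + 1) ^ 2) ^ 2

/-- Expansion of the aliased two-dimensional Matérn (ν = 1) spectral density at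
frequency (1/(2Δ), 1/(2Δ)):
`M_Δ((1/(2Δ),1/(2Δ)); 1, 2)/(4π/α²) = (S₂/π⁴) α⁴Δ⁴ + O(α⁶Δ⁶)`. -/
theorem matern_one_d2_nyquist_nyquist_expansion :
    ∃ C > (0 : ℝ), ∃ δ > (0 : ℝ), ∀ α Δ : ℝ, 0 < α → 0 < Δ → α * Δ < δ →
      |(4 * π * α ^ 2 * ∑' k : ℤ × ℤ,
            1 / (α ^ 2 + 4 * π ^ 2 * (1 / (2 * Δ) + (k.1 : ℝ) / Δ) ^ 2
                + 4 * π ^ 2 * (1 / (2 * Δ) + (k.2 : ℝ) / Δ) ^ 2) ^ 2) / (4 * π / α ^ 2)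
          - (S2 / π ^ 4) * α ^ 4 * Δ ^ 4|
        ≤ C * α ^ 6 * Δ ^ 6 := by
  have hπ : (0:ℝ) < π := pi_pos
  have hπ2 : (9:ℝ) ≤ π ^ 2 := by nlinarith [pi_gt_three]
  have hS2 : 0 ≤ S2 := tsum_nonneg (fun k => by positivity)
  refine ⟨3 * S2 / (2 * π ^ 6) + 1, by positivity, 1, one_pos, ?_⟩
  intro α Δ hα hΔ hδ
  set q : ℤ × ℤ → ℝ := fun k => (2 * (k.1 : ℝ) + 1) ^ 2 + (2 * (k.2 : ℝ) + 1) ^ 2 with hq_def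
  have hq : ∀ k, (2:ℝ) ≤ q k := fun k => by
    have := one_le_oddsq k.1; have := one_le_oddsq k.2
    simp only [hq_def]; linarith
  have hqpos : ∀ k, (0:ℝ) < q k := fun k => lt_of_lt_of_le two_pos (hq k)
  set t : ℝ := α * Δ with ht_def
  have ht : 0 < t := mul_pos hα hΔ
  have ht1 : t ^ 2 ≤ 1 := by nlinarith
  set f : ℤ × ℤ → ℝ := fun k => 1 / (t ^ 2 + π ^ 2 * q k) ^ 2 with hf_def
  set g : ℤ × ℤ → ℝ := fun k => 1 / (π ^ 2 * q k) ^ 2 with hg_def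
  -- summability
  have hfle : ∀ k, f k ≤ 1 / (q k) ^ 2 := by
    intro k
    have hk := hqpos k
    apply one_div_le_one_div_of_le (pow_pos hk 2)
    exact pow_le_pow_left₀ hk.le (by nlinarith [sq_nonneg t]) 2
  have hgle : ∀ k, g k ≤ 1 / (q k) ^ 2 := by
    intro k
    have hk := hqpos k
    apply one_div_le_one_div_of_le (pow_pos hk 2)
    exact pow_le_pow_left₀ hk.le (by nlinarith) 2
  have hfs : Summable f := S2_summable.of_nonneg_of_le (fun k => by positivity) hfle
  have hgs : Summable g := S2_summable.of_nonneg_of_le (fun k => by positivity) hgle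
  -- rewrite the statement tsum
  have hΔ0 : Δ ≠ 0 := ne_of_gt hΔ
  have hsummand : ∀ k : ℤ × ℤ,
      1 / (α ^ 2 + 4 * π ^ 2 * (1 / (2 * Δ) + (k.1 : ℝ) / Δ) ^ 2
          + 4 * π ^ 2 * (1 / (2 * Δ) + (k.2 : ℝ) / Δ) ^ 2) ^ 2 = Δ ^ 4 * f k := by
    intro k
    have hden : α ^ 2 + 4 * π ^ 2 * (1 / (2 * Δ) + (k.1 : ℝ) / Δ) ^ 2
          + 4 * π ^ 2 * (1 / (2 * Δ) + (k.2 : ℝ) / Δ) ^ 2 = (t ^ 2 + π ^ 2 * q k) / Δ ^ 2 := by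
      simp only [hq_def, ht_def]
      field_simp
      ring
    rw [hden, div_pow, one_div_div, hf_def, mul_one_div]
    congr 1
    ring
  have htsum : (∑' k : ℤ × ℤ,
      1 / (α ^ 2 + 4 * π ^ 2 * (1 / (2 * Δ) + (k.1 : ℝ) / Δ) ^ 2
          + 4 * π ^ 2 * (1 / (2 * Δ) + (k.2 : ℝ) / Δ) ^ 2) ^ 2) = Δ ^ 4 * ∑' k, f k := by
    rw [tsum_congr hsummand, tsum_mul_left]
  -- S2 / π^4 = ∑ g
  have hS2g : S2 / π ^ 4 = ∑' k, g k := by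
    rw [S2, ← tsum_div_const]
    refine tsum_congr fun k => ?_
    have hk := (hqpos k).ne'
    simp only [hg_def, hq_def]
    rw [div_div, one_div, one_div, mul_pow]
    congr 1
    ring
  rw [htsum, hS2g]
  -- simplify the left expression
  have hmain : 4 * π * α ^ 2 * (Δ ^ 4 * ∑' k, f k) / (4 * π / α ^ 2)
      = α ^ 4 * Δ ^ 4 * ∑' k, f k := by
    field_simp
  rw [hmain]
  have hdiff : α ^ 4 * Δ ^ 4 * (∑' k, f k) - (∑' k, g k) * α ^ 4 * Δ ^ 4
      = α ^ 4 * Δ ^ 4 * ((∑' k, f k) - ∑' k, g k) := by ring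
  rw [hdiff, abs_mul, abs_of_nonneg (by positivity : (0:ℝ) ≤ α ^ 4 * Δ ^ 4)]
  -- per-term bound
  have hterm : ∀ k, g k - f k ≤ 3 * t ^ 2 / (2 * π ^ 6) * (1 / (q k) ^ 2) := by
    intro k
    have h := term_bound t (q k) (π ^ 2) ht.le ht1 (hq k) hπ2
    rw [show (π:ℝ) ^ 6 = (π ^ 2) ^ 3 by ring]
    exact h
  have hfg : (∑' k, f k) ≤ ∑' k, g k := by
    refine Summable.tsum_le_tsum (fun k => ?_) hfs hgs
    have hk := hqpos k
    apply one_div_le_one_div_of_le (by positivity)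
    exact pow_le_pow_left₀ (by positivity) (by nlinarith [sq_nonneg t]) 2
  have habs : |(∑' k, f k) - ∑' k, g k| = (∑' k, g k) - ∑' k, f k := by
    rw [abs_sub_comm, abs_of_nonneg (by linarith)]
  rw [habs]
  have hsum_bound : (∑' k, g k) - (∑' k, f k) ≤ 3 * t ^ 2 / (2 * π ^ 6) * S2 := by
    rw [← Summable.tsum_sub hgs hfs]
    have heq : 3 * t ^ 2 / (2 * π ^ 6) * S2
        = ∑' k, 3 * t ^ 2 / (2 * π ^ 6) * (1 / (q k) ^ 2) := by
      rw [tsum_mul_left, S2]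
    rw [heq]
    exact Summable.tsum_le_tsum hterm (hgs.sub hfs) (S2_summable.mul_left _)
  calc α ^ 4 * Δ ^ 4 * ((∑' k, g k) - ∑' k, f k)
      ≤ α ^ 4 * Δ ^ 4 * (3 * t ^ 2 / (2 * π ^ 6) * S2) := by
        apply mul_le_mul_of_nonneg_left hsum_bound (by positivity)
    _ = 3 * S2 / (2 * π ^ 6) * α ^ 6 * Δ ^ 6 := by rw [ht_def]; field_simp
    _ ≤ (3 * S2 / (2 * π ^ 6) + 1) * α ^ 6 * Δ ^ 6 := by nlinarith [pow_pos hα 6, pow_pos hΔ 6]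
end

section
/- Fix α > 0. As Δ → 0⁺, the ratio of the SPDE-approximated spectral density to the true aliased Matérn spectral density at the highest frequency in dimension 1 with ν = 3/2 converges to 3: lim_{Δ→0⁺} M̃_Δ(1/(2Δ); 3/2, 1) / M_Δ(1/(2Δ); 3/2, 1) = 3. -/
open Real Filter

set_option maxHeartbeats 1000000

lemma odd_four : HasSum (fun n : ℕ => (1:ℝ) / (2*(n:ℝ)+1) ^ 4) (π ^ 4 / 96) := by
  have hz := hasSum_zeta_four
  have heven : HasSum (fun n : ℕ => (1:ℝ) / ((2*n : ℕ):ℝ) ^ 4) (π ^ 4 / 1440) := by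
    have h : (fun n : ℕ => (1:ℝ) / ((2*n : ℕ):ℝ) ^ 4)
        = fun n : ℕ => (1/16) * ((1:ℝ) / (n:ℝ) ^ 4) := by
      funext n
      push_cast
      rcases Nat.eq_zero_or_pos n with rfl | hn
      · simp
      · have hn' : (n:ℝ) ≠ 0 := Nat.cast_ne_zero.mpr hn.ne'
        field_simp
        ring
    rw [h]
    convert hz.mul_left (1/16) using 1
    rfl
    ring
  have hsodd : Summable (fun n : ℕ => (1:ℝ) / (2*(n:ℝ)+1) ^ 4) := by
    have h := hz.summable.comp_injective (i := fun n : ℕ => 2*n+1)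
      (fun a b hab => by dsimp only at hab; omega)
    have he : (fun n : ℕ => (1:ℝ) / (2*(n:ℝ)+1) ^ 4)
        = (fun n : ℕ => (1:ℝ) / (n:ℝ) ^ 4) ∘ (fun n : ℕ => 2*n+1) := by
      funext n
      simp only [Function.comp]
      push_cast
      ring_nf
    rw [he]
    exact h
  have hodd := hsodd.hasSum
  have htot := HasSum.even_add_odd (f := fun n : ℕ => (1:ℝ) / (n:ℝ) ^ 4) heven (by
    convert hodd using 2 with n
    push_cast
    ring_nf)
  have h2 := hz.unique htot
  have h96 : ∑' n : ℕ, (1:ℝ) / (2*(n:ℝ)+1) ^ 4 = π ^ 4 / 96 := by linarith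
  rwa [h96] at hodd

lemma int_half_four : HasSum (fun k : ℤ => (1:ℝ) / ((k:ℝ) + 1/2) ^ 4) (π ^ 4 / 3) := by
  have hnat : HasSum (fun n : ℕ => (1:ℝ) / (((n:ℤ):ℝ) + 1/2) ^ 4) (π ^ 4 / 6) := by
    have he : (fun n : ℕ => (1:ℝ) / (((n:ℤ):ℝ) + 1/2) ^ 4)
        = fun n : ℕ => 16 * ((1:ℝ) / (2*(n:ℝ)+1) ^ 4) := by
      funext n
      have h2 : (2*(n:ℝ)+1) ≠ 0 := by positivity
      have h1 : ((n:ℝ) + 1/2) ≠ 0 := by positivity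
      push_cast
      field_simp
      ring
    rw [he]
    convert odd_four.mul_left 16 using 1
    rfl
    ring
  have h : HasSum (fun k : ℤ => (1:ℝ) / ((k:ℝ) + 1/2) ^ 4) (π^4/6 + π^4/6) := by
    apply HasSum.of_nat_of_neg_add_one hnat
    convert hnat using 2 with n
    push_cast
    ring_nf
  convert h using 1
  ring

lemma half_ne (k : ℤ) : ((k:ℝ) + 1/2) ≠ 0 := by
  intro h
  have h2 : ((2*k+1 : ℤ):ℝ) = 0 := by push_cast; linarith
  have h3 : (2*k+1 : ℤ) = 0 := by exact_mod_cast h2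
  omega

/-- As `Δ → 0⁺`, the ratio of the SPDE-approximated spectral density to the true
aliased Matérn spectral density at the highest frequency `1/(2Δ)` in dimension 1
with ν = 3/2 converges to 3. -/
theorem spde_over_matern_nyquist_ratio_d1 (α : ℝ) (hα : 0 < α) :
    Tendsto
      (fun Δ : ℝ =>
        (α * Δ ^ 2 / (α * Δ / 2 + 2 / (α * Δ)) ^ 2) /
          ∑' k : ℤ,
            4 * α ^ 3 / (α ^ 2 + 4 * π ^ 2 * (1 / (2 * Δ) + (k : ℝ) / Δ) ^ 2) ^ 2)
      (nhdsWithin 0 (Set.Ioi 0)) (nhds 3) := by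
  have hπ : (0:ℝ) < π := pi_pos
  set S : ℝ → ℝ := fun t => ∑' k : ℤ, (1:ℝ) / (t^2 + ((k:ℝ)+1/2)^2)^2 with hSdef
  -- limit of S along the path
  have hS : Tendsto (fun Δ : ℝ => S (α*Δ/(2*π))) (nhdsWithin 0 (Set.Ioi 0)) (nhds (π^4/3)) := by
    rw [← int_half_four.tsum_eq]
    apply tendsto_tsum_of_dominated_convergence (bound := fun k : ℤ => (1:ℝ) / ((k:ℝ)+1/2)^4)
      int_half_four.summable
    · intro k
      have hc : (0:ℝ) < ((k:ℝ)+1/2)^2 := by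
        have := half_ne k
        positivity
      have hcont : Tendsto (fun Δ : ℝ => ((α*Δ/(2*π))^2 + ((k:ℝ)+1/2)^2)^2)
          (nhdsWithin 0 (Set.Ioi 0)) (nhds (((α*0/(2*π))^2 + ((k:ℝ)+1/2)^2)^2)) := by
        apply Tendsto.mono_left _ nhdsWithin_le_nhds
        exact (Continuous.tendsto (by continuity) 0)
      have hne : (((α*0/(2*π))^2 + ((k:ℝ)+1/2)^2)^2) ≠ 0 := by positivity
      have := (tendsto_const_nhds (x := (1:ℝ))).div hcont hne
      convert this using 2
      simp
      ring
    · filter_upwards with Δ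
      intro k
      have hc : (0:ℝ) < ((k:ℝ)+1/2)^2 := by
        have := half_ne k
        positivity
      have hpos : (0:ℝ) < ((α*Δ/(2*π))^2 + ((k:ℝ)+1/2)^2)^2 := by positivity
      rw [Real.norm_eq_abs, abs_of_nonneg (by positivity)]
      have h4 : ((k:ℝ)+1/2)^4 = (((k:ℝ)+1/2)^2)^2 := by ring
      rw [h4]
      apply one_div_le_one_div_of_le (by positivity)
      apply pow_le_pow_left₀ (by positivity)
      nlinarith [sq_nonneg (α*Δ/(2*π))]
  -- limit of the prefactor
  have hA : Tendsto (fun Δ : ℝ => 16*π^4/(α^2*Δ^2+4)^2) (nhdsWithin 0 (Set.Ioi 0))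
      (nhds (π^4)) := by
    have h0 : (16*π^4/(α^2*(0:ℝ)^2+4)^2) = π^4 := by norm_num
    have hcont : Continuous fun Δ : ℝ => 16*π^4/(α^2*Δ^2+4)^2 :=
      Continuous.div continuous_const (by continuity) (fun x => by positivity)
    have h := (hcont.tendsto 0).mono_left (nhdsWithin_le_nhds (s := Set.Ioi 0))
    rwa [h0] at h
  have hne3 : (π^4/3 : ℝ) ≠ 0 := by positivity
  have hdiv := hA.div hS hne3
  have hval : π^4 / (π^4/3) = (3:ℝ) := by
    field_simp
  rw [hval] at hdiv
  apply Tendsto.congr' _ hdiv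
  filter_upwards [self_mem_nhdsWithin] with Δ hΔ
  have hΔ0 : (0:ℝ) < Δ := hΔ
  have hΔne : Δ ≠ 0 := hΔ0.ne'
  have hαne : α ≠ 0 := hα.ne'
  have hπne : π ≠ 0 := hπ.ne'
  have hd4 : (α^2*Δ^2+4) ≠ 0 := by positivity
  -- rewrite the tsum
  have hts : ∑' k : ℤ, 4*α^3/(α^2 + 4*π^2*(1/(2*Δ) + (k:ℝ)/Δ)^2)^2
      = (α^3*Δ^4/(4*π^4)) * S (α*Δ/(2*π)) := by
    rw [hSdef, ← tsum_mul_left]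
    apply tsum_congr
    intro k
    have hc : (0:ℝ) < ((k:ℝ)+1/2)^2 := by
      have := half_ne k
      positivity
    have h1 : (α^2 + 4*π^2*(1/(2*Δ) + (k:ℝ)/Δ)^2) ≠ 0 := by positivity
    have h2 : ((α*Δ/(2*π))^2 + ((k:ℝ)+1/2)^2) ≠ 0 := by positivity
    field_simp
    ring
  -- rewrite the numerator
  have hnum : α * Δ ^ 2 / (α * Δ / 2 + 2 / (α * Δ)) ^ 2 = 4*α^3*Δ^4/(α^2*Δ^2+4)^2 := by
    have hden : (α * Δ / 2 + 2 / (α * Δ)) ≠ 0 := by positivity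
    field_simp
    ring
  have hx : (4*α^3*Δ^4/(α^2*Δ^2+4)^2) / (α^3*Δ^4/(4*π^4)) = 16*π^4/(α^2*Δ^2+4)^2 := by
    field_simp
    ring
  rw [hnum, hts, ← div_div, hx]
  rfl
end
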